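/- Let s < 0, and for an integer k ≥ 1 define g_k(η) := 2^{−sk/2}( χ_{[k+1/8, k+1/4]}(η) + χ_{[−2k+1/4, −2k+1/2]}(η) ). For t > 0 and ξ ∈ ℝ define R_{k,t}(ξ) := χ_{[1/2,1]}(ξ) · | ∬_{ℝ²} (e^{2it(ξ−ξ₁)(ξ−ξ₂)} − 1)/(2(ξ−ξ₁)(ξ−ξ₂)) · g_k(ξ₁) g_k(ξ₂) g_k(ξ−ξ₁−ξ₂) dξ₁ dξ₂ |. Then there exist c > 0 and κ₀ ∈ (0,1) such that for every κ ∈ (0, κ₀] there is k₀ such that for all integers k ≥ k₀, with t = κ/k², one has R_{k,t}(ξ) ≥ c · 2^{−sk} · κ/k² for every ξ ∈ [5/8, 7/8]. -/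

import Mathlib

open MeasureTheory

/-- `g_k(η) = 2^{−sk/2}(χ_{[k+1/8, k+1/4]}(η) + χ_{[−2k+1/4, −2k+1/2]}(η))`. -/
noncomputable def gfun (s : ℝ) (k : ℕ) (η : ℝ) : ℝ :=
  (2 : ℝ) ^ (-s * (k : ℝ) / 2) *
    (Set.indicator (Set.Icc ((k : ℝ) + 1 / 8) ((k : ℝ) + 1 / 4)) (fun _ => (1 : ℝ)) η
      + Set.indicator (Set.Icc (-2 * (k : ℝ) + 1 / 4) (-2 * (k : ℝ) + 1 / 2)) (fun _ => (1 : ℝ)) η)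

/-- `R_{k,t}(ξ) = χ_{[1/2,1]}(ξ) · |∬ (e^{2it(ξ−ξ₁)(ξ−ξ₂)} − 1)/(2(ξ−ξ₁)(ξ−ξ₂))
  g_k(ξ₁) g_k(ξ₂) g_k(ξ−ξ₁−ξ₂) dξ₁ dξ₂|`. -/
noncomputable def Rfun (s : ℝ) (k : ℕ) (t ξ : ℝ) : ℝ :=
  Set.indicator (Set.Icc (1 / 2 : ℝ) 1) (fun _ => (1 : ℝ)) ξ *
    ‖∫ p : ℝ × ℝ,
      (Complex.exp (2 * Complex.I * (t : ℂ) * ((ξ - p.1 : ℝ) : ℂ) * ((ξ - p.2 : ℝ) : ℂ)) - 1)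
          / (2 * ((ξ - p.1 : ℝ) : ℂ) * ((ξ - p.2 : ℝ) : ℂ))
        * ((gfun s k p.1 : ℝ) : ℂ) * ((gfun s k p.2 : ℝ) : ℂ)
        * ((gfun s k (ξ - p.1 - p.2) : ℝ) : ℂ)‖

namespace Stmt15Aux

lemma g_nonneg (s : ℝ) (k : ℕ) (η : ℝ) : 0 ≤ gfun s k η := by
  unfold gfun
  have h1 : (0:ℝ) ≤ Set.indicator (Set.Icc ((k : ℝ) + 1 / 8) ((k : ℝ) + 1 / 4))
      (fun _ => (1 : ℝ)) η := Set.indicator_nonneg (fun _ _ => zero_le_one) η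
  have h2 : (0:ℝ) ≤ Set.indicator (Set.Icc (-2 * (k : ℝ) + 1 / 4) (-2 * (k : ℝ) + 1 / 2))
      (fun _ => (1 : ℝ)) η := Set.indicator_nonneg (fun _ _ => zero_le_one) η
  have h3 : (0:ℝ) ≤ (2:ℝ) ^ (-s * (k : ℝ) / 2) := le_of_lt (Real.rpow_pos_of_pos two_pos _)
  exact mul_nonneg h3 (by linarith)

lemma g_le (s : ℝ) (k : ℕ) (η : ℝ) : gfun s k η ≤ 2 * (2:ℝ) ^ (-s * (k : ℝ) / 2) := by
  unfold gfun
  have h1 : Set.indicator (Set.Icc ((k : ℝ) + 1 / 8) ((k : ℝ) + 1 / 4))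
      (fun _ => (1 : ℝ)) η ≤ 1 := by
    by_cases h : η ∈ Set.Icc ((k : ℝ) + 1 / 8) ((k : ℝ) + 1 / 4)
    · rw [Set.indicator_of_mem h]
    · rw [Set.indicator_of_notMem h]; norm_num
  have h2 : Set.indicator (Set.Icc (-2 * (k : ℝ) + 1 / 4) (-2 * (k : ℝ) + 1 / 2))
      (fun _ => (1 : ℝ)) η ≤ 1 := by
    by_cases h : η ∈ Set.Icc (-2 * (k : ℝ) + 1 / 4) (-2 * (k : ℝ) + 1 / 2)
    · rw [Set.indicator_of_mem h]
    · rw [Set.indicator_of_notMem h]; norm_num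
  have h3 : (0:ℝ) < (2:ℝ) ^ (-s * (k : ℝ) / 2) := Real.rpow_pos_of_pos two_pos _
  nlinarith

lemma g_measurable (s : ℝ) (k : ℕ) : Measurable (gfun s k) := by
  unfold gfun
  exact measurable_const.mul
    ((measurable_const.indicator measurableSet_Icc).add
      (measurable_const.indicator measurableSet_Icc))

/-- support set -/
def U (k : ℕ) : Set ℝ :=
  Set.Icc ((k : ℝ) + 1 / 8) ((k : ℝ) + 1 / 4) ∪
    Set.Icc (-2 * (k : ℝ) + 1 / 4) (-2 * (k : ℝ) + 1 / 2)

lemma g_eq_zero (s : ℝ) (k : ℕ) (η : ℝ) (h : η ∉ U k) : gfun s k η = 0 := by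
  unfold gfun
  rw [Set.indicator_of_notMem (fun hc => h (Or.inl hc)),
    Set.indicator_of_notMem (fun hc => h (Or.inr hc))]
  ring

lemma g_val_left (s : ℝ) (k : ℕ) (hk : 1 ≤ (k:ℝ)) (η : ℝ)
    (h : η ∈ Set.Icc ((k : ℝ) + 1 / 8) ((k : ℝ) + 1 / 4)) :
    gfun s k η = (2:ℝ) ^ (-s * (k : ℝ) / 2) := by
  unfold gfun
  rw [Set.indicator_of_mem h, Set.indicator_of_notMem (by
    intro hc
    have h1 := h.1
    have h2 := hc.2
    simp only [Set.mem_Icc] at *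
    linarith)]
  ring

lemma g_val_right (s : ℝ) (k : ℕ) (hk : 1 ≤ (k:ℝ)) (η : ℝ)
    (h : η ∈ Set.Icc (-2 * (k : ℝ) + 1 / 4) (-2 * (k : ℝ) + 1 / 2)) :
    gfun s k η = (2:ℝ) ^ (-s * (k : ℝ) / 2) := by
  unfold gfun
  rw [Set.indicator_of_mem h, Set.indicator_of_notMem (by
    intro hc
    have h1 := h.2
    have h2 := hc.1
    simp only [Set.mem_Icc] at *
    linarith)]
  ring

lemma sin_ge (x : ℝ) (h0 : 0 ≤ x) (h1 : x ≤ 1) : 3/4 * x ≤ Real.sin x := by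
  rcases eq_or_lt_of_le h0 with h | h
  · simp [← h]
  · have h2 := Real.sin_gt_sub_cube h
    nlinarith [mul_nonneg (mul_nonneg h.le (sub_nonneg.2 h1)) (by linarith : (0:ℝ) ≤ 1 + x)]

lemma imq_nonneg (t P : ℝ) (ht : 0 < t) (hb : 2*t*|P| ≤ 1) :
    0 ≤ Real.sin (2*t*P) / (2*P) := by
  rcases lt_trichotomy P 0 with h | h | h
  · have habs : |P| = -P := abs_of_neg h
    have h1 : -Real.pi ≤ 2*t*P := by
      have : -(2*t*P) ≤ 1 := by rw [habs] at hb; linarith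
      nlinarith [Real.pi_gt_three]
    have h2 : 2*t*P ≤ 0 := by nlinarith
    have h3 : Real.sin (2*t*P) ≤ 0 := Real.sin_nonpos_of_nonpos_of_neg_pi_le h2 h1
    exact div_nonneg_iff.2 (Or.inr ⟨h3, by linarith⟩)
  · simp [h]
  · have habs : |P| = P := abs_of_pos h
    have h1 : 0 ≤ 2*t*P := by positivity
    have h2 : 2*t*P ≤ Real.pi := by
      rw [habs] at hb; nlinarith [Real.pi_gt_three]
    exact div_nonneg (Real.sin_nonneg_of_nonneg_of_le_pi h1 h2) (by linarith)

lemma imq_lower (t P : ℝ) (ht : 0 < t) (hP : 0 < P) (hb : 2*t*P ≤ 1) :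
    3/4 * t ≤ Real.sin (2*t*P) / (2*P) := by
  have h1 : 0 ≤ 2*t*P := by positivity
  have h2 := sin_ge (2*t*P) h1 hb
  rw [le_div_iff₀ (by linarith)]
  nlinarith

lemma integrand_im (t u v a b c : ℝ) :
    ((Complex.exp (2 * Complex.I * (t:ℂ) * (u:ℂ) * (v:ℂ)) - 1)
        / (2 * (u:ℂ) * (v:ℂ)) * (a:ℂ) * (b:ℂ) * (c:ℂ)).im
      = Real.sin (2*t*(u*v)) / (2*(u*v)) * (a*b*c) := by
  have h : 2 * Complex.I * (t:ℂ) * (u:ℂ) * (v:ℂ) = ((2*t*(u*v) : ℝ):ℂ) * Complex.I := by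
    push_cast; ring
  have h2 : (2 * (u:ℂ) * (v:ℂ)) = ((2*(u*v) : ℝ):ℂ) := by push_cast; ring
  have e1 : ∀ (z : ℂ) (r : ℝ), (z * (r:ℂ)).im = z.im * r := by
    intro z r
    simp [Complex.mul_im]
  rw [h, h2, e1, e1, e1, Complex.div_ofReal_im, Complex.sub_im,
    Complex.exp_ofReal_mul_I_im, Complex.one_im]
  ring

end Stmt15Aux

set_option maxHeartbeats 1000000 in
/-- For `s < 0` there are `c > 0` and `κ₀ ∈ (0,1)` such that for each `κ ∈ (0,κ₀]` there is
`k₀` with: for all integers `k ≥ k₀`, setting `t = κ/k²`,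
`R_{k,t}(ξ) ≥ c · 2^{−sk} κ/k²` for every `ξ ∈ [5/8, 7/8]`. -/
theorem stmt_15 (s : ℝ) (hs : s < 0) :
    ∃ c > (0 : ℝ), ∃ κ₀ ∈ Set.Ioo (0 : ℝ) 1, ∀ κ ∈ Set.Ioc (0 : ℝ) κ₀, ∃ k₀ : ℕ,
      ∀ k : ℕ, k₀ ≤ k → ∀ ξ ∈ Set.Icc (5 / 8 : ℝ) (7 / 8),
        c * (2 : ℝ) ^ (-s * (k : ℝ)) * κ / (k : ℝ) ^ 2 ≤ Rfun s k (κ / (k : ℝ) ^ 2) ξ := by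
  classical
  refine ⟨3/4096, by norm_num, 1/32, ⟨by norm_num, by norm_num⟩, ?_⟩
  rintro κ ⟨hκ0, hκ32⟩
  refine ⟨1, ?_⟩
  rintro k hk ξ ⟨hξ1, hξ2⟩
  have hk1 : (1:ℝ) ≤ (k:ℝ) := by exact_mod_cast hk
  have hkpos : (0:ℝ) < (k:ℝ) := by linarith
  set t : ℝ := κ / (k:ℝ)^2 with ht_def
  have htpos : 0 < t := by positivity
  set D : ℝ := (2:ℝ) ^ (-s * (k:ℝ) / 2) with hD_def
  have hDpos : 0 < D := Real.rpow_pos_of_pos two_pos _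
  set f : ℝ × ℝ → ℂ := fun p =>
    (Complex.exp (2 * Complex.I * (t : ℂ) * ((ξ - p.1 : ℝ) : ℂ) * ((ξ - p.2 : ℝ) : ℂ)) - 1)
        / (2 * ((ξ - p.1 : ℝ) : ℂ) * ((ξ - p.2 : ℝ) : ℂ))
      * ((gfun s k p.1 : ℝ) : ℂ) * ((gfun s k p.2 : ℝ) : ℂ) * ((gfun s k (ξ - p.1 - p.2) : ℝ) : ℂ) with hf_def
  -- imaginary part formula
  have him : ∀ p : ℝ × ℝ, (f p).im
      = Real.sin (2*t*((ξ-p.1)*(ξ-p.2))) / (2*((ξ-p.1)*(ξ-p.2)))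
        * (gfun s k p.1 * gfun s k p.2 * gfun s k (ξ-p.1-p.2)) := by
    intro p
    exact Stmt15Aux.integrand_im t (ξ-p.1) (ξ-p.2) (gfun s k p.1) (gfun s k p.2) (gfun s k (ξ-p.1-p.2))
  -- bound on |ξ - η| for η in the support
  have hUbound : ∀ η ∈ Stmt15Aux.U k, |ξ - η| ≤ 3 * (k:ℝ) ∧ 1/4 ≤ |ξ - η| := by
    intro η hη
    rcases hη with h | h
    · obtain ⟨ha, hb⟩ := h
      rw [abs_of_nonpos (by linarith)]
      constructor <;> [skip; skip] <;> · simp only [neg_sub]; linarith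
    · obtain ⟨ha, hb⟩ := h
      rw [abs_of_nonneg (by linarith)]
      constructor <;> linarith
  -- nonnegativity of the imaginary part
  have him_nonneg : ∀ p : ℝ × ℝ, 0 ≤ (f p).im := by
    intro p
    rw [him p]
    by_cases h1 : p.1 ∈ Stmt15Aux.U k
    · by_cases h2 : p.2 ∈ Stmt15Aux.U k
      · have hb1 := hUbound p.1 h1
        have hb2 := hUbound p.2 h2
        have habs : |(ξ-p.1)*(ξ-p.2)| ≤ 9*(k:ℝ)^2 := by
          rw [abs_mul]
          calc |ξ-p.1| * |ξ-p.2| ≤ (3*(k:ℝ)) * (3*(k:ℝ)) :=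
                mul_le_mul hb1.1 hb2.1 (abs_nonneg _) (by positivity)
            _ = 9*(k:ℝ)^2 := by ring
        have hbnd : 2*t*|(ξ-p.1)*(ξ-p.2)| ≤ 1 := by
          have : 2*t*|(ξ-p.1)*(ξ-p.2)| ≤ 2*t*(9*(k:ℝ)^2) := by
            apply mul_le_mul_of_nonneg_left habs (by positivity)
          have ht9 : 2*t*(9*(k:ℝ)^2) = 18*κ := by
            rw [ht_def]; field_simp; ring
          rw [ht9] at this
          linarith
        exact mul_nonneg (Stmt15Aux.imq_nonneg t _ htpos hbnd)
          (mul_nonneg (mul_nonneg (Stmt15Aux.g_nonneg s k _) (Stmt15Aux.g_nonneg s k _))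
            (Stmt15Aux.g_nonneg s k _))
      · rw [Stmt15Aux.g_eq_zero s k _ h2]; ring_nf; exact le_refl _
    · rw [Stmt15Aux.g_eq_zero s k _ h1]; ring_nf; exact le_refl _
  -- measurability
  have hgm : Measurable (gfun s k) := Stmt15Aux.g_measurable s k
  have hfm : Measurable f := by
    apply Measurable.mul
    apply Measurable.mul
    apply Measurable.mul
    · apply Measurable.div
      · apply Measurable.sub _ measurable_const
        apply Complex.measurable_exp.comp
        apply Measurable.mul
        apply Measurable.mul measurable_const
        · exact Complex.measurable_ofReal.comp ((measurable_const.sub measurable_fst))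
        · exact Complex.measurable_ofReal.comp ((measurable_const.sub measurable_snd))
      · apply Measurable.mul
        apply Measurable.mul measurable_const
        · exact Complex.measurable_ofReal.comp ((measurable_const.sub measurable_fst))
        · exact Complex.measurable_ofReal.comp ((measurable_const.sub measurable_snd))
    · exact Complex.measurable_ofReal.comp (hgm.comp measurable_fst)
    · exact Complex.measurable_ofReal.comp (hgm.comp measurable_snd)
    · exact Complex.measurable_ofReal.comp
        (hgm.comp ((measurable_const.sub measurable_fst).sub measurable_snd))
  -- integrability
  have hUmeas : MeasurableSet (Stmt15Aux.U k) := (measurableSet_Icc).union measurableSet_Icc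
  have hKmeas : MeasurableSet (Stmt15Aux.U k ×ˢ Stmt15Aux.U k) := hUmeas.prod hUmeas
  have hUvol : volume (Stmt15Aux.U k) < ⊤ := by
    apply lt_of_le_of_lt (measure_union_le _ _)
    rw [Real.volume_Icc, Real.volume_Icc]
    exact ENNReal.add_lt_top.2 ⟨ENNReal.ofReal_lt_top, ENNReal.ofReal_lt_top⟩
  have hKvol : volume (Stmt15Aux.U k ×ˢ Stmt15Aux.U k) ≠ ⊤ := by
    have : (volume : Measure (ℝ × ℝ)) (Stmt15Aux.U k ×ˢ Stmt15Aux.U k)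
        = volume (Stmt15Aux.U k) * volume (Stmt15Aux.U k) := by
      rw [show (volume : Measure (ℝ × ℝ)) = (volume : Measure ℝ).prod volume from rfl]
      exact Measure.prod_prod _ _
    rw [this]
    exact (ENNReal.mul_lt_top hUvol hUvol).ne
  have hfeq : f = (Stmt15Aux.U k ×ˢ Stmt15Aux.U k).indicator f := by
    funext p
    by_cases hp : p ∈ Stmt15Aux.U k ×ˢ Stmt15Aux.U k
    · rw [Set.indicator_of_mem hp]
    · rw [Set.indicator_of_notMem hp]
      rw [Set.mem_prod] at hp
      push_neg at hp
      by_cases h1 : p.1 ∈ Stmt15Aux.U k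
      · have h2 := hp h1
        rw [hf_def]
        simp [Stmt15Aux.g_eq_zero s k _ h2]
      · rw [hf_def]
        simp [Stmt15Aux.g_eq_zero s k _ h1]
  have hfi : Integrable f := by
    rw [hfeq]
    rw [integrable_indicator_iff hKmeas]
    apply Measure.integrableOn_of_bounded hKvol hfm.aestronglyMeasurable
      (M := 16 * (2*D)^3)
    rw [ae_restrict_iff' hKmeas]
    apply ae_of_all
    intro p hp
    obtain ⟨h1, h2⟩ := hp
    have hb1 := (hUbound p.1 h1).2
    have hb2 := (hUbound p.2 h2).2
    have hq : ‖(Complex.exp (2 * Complex.I * (t : ℂ) * ((ξ - p.1 : ℝ) : ℂ)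
        * ((ξ - p.2 : ℝ) : ℂ)) - 1) / (2 * ((ξ - p.1 : ℝ) : ℂ) * ((ξ - p.2 : ℝ) : ℂ))‖
        ≤ 16 := by
      rw [norm_div]
      have hnum : ‖Complex.exp (2 * Complex.I * (t : ℂ) * ((ξ - p.1 : ℝ) : ℂ)
          * ((ξ - p.2 : ℝ) : ℂ)) - 1‖ ≤ 2 := by
        apply le_trans (norm_sub_le _ _)
        have harg : 2 * Complex.I * (t : ℂ) * ((ξ - p.1 : ℝ) : ℂ) * ((ξ - p.2 : ℝ) : ℂ)
            = ((2*t*((ξ-p.1)*(ξ-p.2)) : ℝ):ℂ) * Complex.I := by push_cast; ring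
        rw [harg]
        rw [Complex.norm_exp_ofReal_mul_I]
        norm_num
      have hden : (1/8 : ℝ) ≤ ‖2 * ((ξ - p.1 : ℝ) : ℂ) * ((ξ - p.2 : ℝ) : ℂ)‖ := by
        rw [norm_mul, norm_mul]
        simp only [Complex.norm_real, Complex.norm_ofNat, Real.norm_eq_abs]
        nlinarith [abs_nonneg (ξ - p.1), abs_nonneg (ξ - p.2)]
      have hdenpos : (0:ℝ) < ‖2 * ((ξ - p.1 : ℝ) : ℂ) * ((ξ - p.2 : ℝ) : ℂ)‖ := by
        linarith
      rw [div_le_iff₀ hdenpos]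
      nlinarith
    rw [hf_def]
    simp only [norm_mul, Complex.norm_real, Real.norm_eq_abs]
    rw [abs_of_nonneg (Stmt15Aux.g_nonneg s k _), abs_of_nonneg (Stmt15Aux.g_nonneg s k _),
      abs_of_nonneg (Stmt15Aux.g_nonneg s k _)]
    have hg1 := Stmt15Aux.g_le s k p.1
    have hg2 := Stmt15Aux.g_le s k p.2
    have hg3 := Stmt15Aux.g_le s k (ξ - p.1 - p.2)
    have hn1 := Stmt15Aux.g_nonneg s k p.1
    have hn2 := Stmt15Aux.g_nonneg s k p.2
    have hn3 := Stmt15Aux.g_nonneg s k (ξ - p.1 - p.2)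
    rw [← hD_def] at hg1 hg2 hg3
    calc ‖(Complex.exp (2 * Complex.I * (t : ℂ) * ((ξ - p.1 : ℝ) : ℂ)
          * ((ξ - p.2 : ℝ) : ℂ)) - 1) / (2 * ((ξ - p.1 : ℝ) : ℂ) * ((ξ - p.2 : ℝ) : ℂ))‖
          * gfun s k p.1 * gfun s k p.2 * gfun s k (ξ - p.1 - p.2)
        ≤ 16 * (2*D) * (2*D) * (2*D) := by
          apply mul_le_mul _ hg3 hn3 (by positivity)
          apply mul_le_mul _ hg2 hn2 (by positivity)
          exact mul_le_mul hq hg1 hn1 (by norm_num)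
      _ = 16 * (2*D)^3 := by ring
  -- the rectangle
  set R : Set (ℝ × ℝ) :=
    Set.Icc ((k:ℝ) + ξ/4 - 1/64) ((k:ℝ) + ξ/4 + 1/64)
      ×ˢ Set.Icc ((k:ℝ) + ξ/4 - 1/64) ((k:ℝ) + ξ/4 + 1/64) with hR_def
  have hRmeas : MeasurableSet R := measurableSet_Icc.prod measurableSet_Icc
  have hrect : ∀ p ∈ R, 3/4 * t * D^3 ≤ (f p).im := by
    rintro p ⟨⟨ha1, ha2⟩, ⟨hb1, hb2⟩⟩
    have hmem1 : p.1 ∈ Set.Icc ((k : ℝ) + 1 / 8) ((k : ℝ) + 1 / 4) := by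
      constructor <;> [linarith; linarith]
    have hmem2 : p.2 ∈ Set.Icc ((k : ℝ) + 1 / 8) ((k : ℝ) + 1 / 4) := by
      constructor <;> [linarith; linarith]
    have hmem3 : ξ - p.1 - p.2 ∈ Set.Icc (-2 * (k : ℝ) + 1 / 4) (-2 * (k : ℝ) + 1 / 2) := by
      constructor <;> [linarith; linarith]
    rw [him p, Stmt15Aux.g_val_left s k hk1 _ hmem1,
      Stmt15Aux.g_val_left s k hk1 _ hmem2, Stmt15Aux.g_val_right s k hk1 _ hmem3, ← hD_def]
    have hu1 : ξ - p.1 ≤ -(1/4) := by linarith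
    have hu2 : ξ - p.2 ≤ -(1/4) := by linarith
    have hP : 0 < (ξ-p.1)*(ξ-p.2) := mul_pos_of_neg_of_neg (by linarith) (by linarith)
    have hPle : (ξ-p.1)*(ξ-p.2) ≤ (k:ℝ)^2 := by nlinarith
    have hbnd : 2*t*((ξ-p.1)*(ξ-p.2)) ≤ 1 := by
      have : 2*t*((ξ-p.1)*(ξ-p.2)) ≤ 2*t*(k:ℝ)^2 :=
        mul_le_mul_of_nonneg_left hPle (by positivity)
      have ht2 : 2*t*(k:ℝ)^2 = 2*κ := by rw [ht_def]; field_simp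
      rw [ht2] at this
      linarith
    have hlow := Stmt15Aux.imq_lower t _ htpos hP hbnd
    have : D*D*D = D^3 := by ring
    calc 3/4 * t * D^3 ≤ (Real.sin (2*t*((ξ-p.1)*(ξ-p.2))) / (2*((ξ-p.1)*(ξ-p.2)))) * D^3 := by
          apply mul_le_mul_of_nonneg_right hlow (by positivity)
      _ = Real.sin (2*t*((ξ-p.1)*(ξ-p.2))) / (2*((ξ-p.1)*(ξ-p.2))) * (D*D*D) := by
          rw [this]
  -- integral lower bound
  have hImi : Integrable (fun p => (f p).im) := by
    simpa using hfi.im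
  have hIndInt : Integrable (fun p => R.indicator (fun _ => 3/4 * t * D^3) p) := by
    rw [integrable_indicator_iff hRmeas]
    refine integrableOn_const ?_ enorm_ne_top
    have : (volume : Measure (ℝ × ℝ)) R = volume (Set.Icc ((k:ℝ) + ξ/4 - 1/64) ((k:ℝ) + ξ/4 + 1/64))
        * volume (Set.Icc ((k:ℝ) + ξ/4 - 1/64) ((k:ℝ) + ξ/4 + 1/64)) := by
      rw [hR_def, show (volume : Measure (ℝ × ℝ)) = (volume : Measure ℝ).prod volume from rfl]
      exact Measure.prod_prod _ _
    rw [this, Real.volume_Icc]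
    exact (ENNReal.mul_lt_top ENNReal.ofReal_lt_top ENNReal.ofReal_lt_top).ne
  have hmono : ∀ p : ℝ × ℝ, R.indicator (fun _ => 3/4 * t * D^3) p ≤ (f p).im := by
    intro p
    by_cases hp : p ∈ R
    · rw [Set.indicator_of_mem hp]; exact hrect p hp
    · rw [Set.indicator_of_notMem hp]; exact him_nonneg p
  have hInt_mono : ∫ p : ℝ × ℝ, R.indicator (fun _ => 3/4 * t * D^3) p
      ≤ ∫ p : ℝ × ℝ, (f p).im := integral_mono hIndInt hImi hmono
  have hvolR : (volume R).toReal = 1/1024 := by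
    have : (volume : Measure (ℝ × ℝ)) R = volume (Set.Icc ((k:ℝ) + ξ/4 - 1/64) ((k:ℝ) + ξ/4 + 1/64))
        * volume (Set.Icc ((k:ℝ) + ξ/4 - 1/64) ((k:ℝ) + ξ/4 + 1/64)) := by
      rw [hR_def, show (volume : Measure (ℝ × ℝ)) = (volume : Measure ℝ).prod volume from rfl]
      exact Measure.prod_prod _ _
    rw [this, Real.volume_Icc]
    have h32 : (k:ℝ) + ξ/4 + 1/64 - ((k:ℝ) + ξ/4 - 1/64) = 1/32 := by ring
    rw [h32, ← ENNReal.ofReal_mul (by norm_num)]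
    rw [ENNReal.toReal_ofReal (by norm_num)]
    norm_num
  have hIndVal : ∫ p : ℝ × ℝ, R.indicator (fun _ => 3/4 * t * D^3) p
      = 1/1024 * (3/4 * t * D^3) := by
    rw [integral_indicator_const _ hRmeas, measureReal_def, hvolR]
    simp [smul_eq_mul]
  have hImInt : ∫ p : ℝ × ℝ, (f p).im = (∫ p : ℝ × ℝ, f p).im := by
    simpa using integral_im hfi
  have hnorm : (∫ p : ℝ × ℝ, f p).im ≤ ‖∫ p : ℝ × ℝ, f p‖ := by
    exact le_trans (le_abs_self _) (Complex.abs_im_le_norm _)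
  -- final assembly
  have hfinal : 1/1024 * (3/4 * t * D^3) ≤ ‖∫ p : ℝ × ℝ, f p‖ := by
    rw [← hIndVal]
    calc ∫ p : ℝ × ℝ, R.indicator (fun _ => 3/4 * t * D^3) p
        ≤ ∫ p : ℝ × ℝ, (f p).im := hInt_mono
      _ = (∫ p : ℝ × ℝ, f p).im := hImInt
      _ ≤ ‖∫ p : ℝ × ℝ, f p‖ := hnorm
  have hRfun : Rfun s k t ξ = ‖∫ p : ℝ × ℝ, f p‖ := by
    unfold Rfun
    rw [Set.indicator_of_mem (by constructor <;> linarith : ξ ∈ Set.Icc (1/2 : ℝ) 1)]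
    rw [one_mul]
  have hD3 : (2:ℝ) ^ (-s * (k:ℝ)) ≤ D^3 := by
    rw [hD_def, ← Real.rpow_natCast ((2:ℝ) ^ (-s * (k:ℝ) / 2)) 3,
      ← Real.rpow_mul (by norm_num)]
    apply Real.rpow_le_rpow_of_exponent_le (by norm_num)
    push_cast
    nlinarith [mul_pos (neg_pos.2 hs) hkpos]
  rw [hRfun] at *
  calc (3/4096 : ℝ) * (2:ℝ) ^ (-s * (k:ℝ)) * κ / (k:ℝ)^2
      ≤ 3/4096 * D^3 * κ / (k:ℝ)^2 := by
        apply div_le_div_of_nonneg_right _ (by positivity)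
        · exact mul_le_mul_of_nonneg_right (mul_le_mul_of_nonneg_left hD3 (by norm_num)) hκ0.le
      _ = 1/1024 * (3/4 * t * D^3) := by rw [ht_def]; ring
      _ ≤ ‖∫ p : ℝ × ℝ, f p‖ := hfinal
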